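/- Let g_L be the left ESFR correction function with parameter η ≥ 0 and degree p ≥ 1, and let φ be a polynomial of degree at most p − 1. Then ∫_{−1}^{1} g_L(r) φ'(r) dr = (−1)^{p+1} η α_{p−1} / ((1+η)(2p−1)), where α_{p−1} is the coefficient of Ψ_{p−1} in the Legendre expansion of φ'. In particular this integral is zero for all such φ if and only if η = 0. -/

import Mathlib

/-- The degree-`p` Legendre polynomial via the Rodrigues formula. -/
noncomputable def legendre (p : ℕ) (r : ℝ) : ℝ :=
  (1 / ((2:ℝ)^p * (Nat.factorial p))) * iteratedDeriv p (fun x : ℝ => (x^2 - 1)^p) r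


/-- Left ESFR correction function with parameter `η`. -/
noncomputable def gL (p : ℕ) (η r : ℝ) : ℝ :=
  ((-1:ℝ)^p / 2) *
    (legendre p r - (η * legendre (p-1) r + legendre (p+1) r) / (1 + η))

/-- Right ESFR correction function with parameter `η`. -/
noncomputable def gR (p : ℕ) (η r : ℝ) : ℝ :=
  (1/2 : ℝ) *
    (legendre p r + (η * legendre (p-1) r + legendre (p+1) r) / (1 + η))

open Polynomial intervalIntegral

noncomputable def legP (n : ℕ) : Polynomial ℝ :=
  C ((1:ℝ) / (2^n * (Nat.factorial n))) * derivative^[n] ((X^2 - 1)^n)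

lemma iteratedDeriv_eval (k : ℕ) (Q : Polynomial ℝ) :
    iteratedDeriv k (fun x : ℝ => Q.eval x) = fun r => (derivative^[k] Q).eval r := by
  induction k generalizing Q with
  | zero => simp
  | succ k ih =>
    rw [iteratedDeriv_succ', Function.iterate_succ, Function.comp_apply]
    have hd : (deriv fun x => eval x Q) = fun x => eval x (derivative Q) :=
      funext fun x => (Q.hasDerivAt x).deriv
    rw [hd, ih]

lemma legendre_eq (n : ℕ) (r : ℝ) : legendre n r = (legP n).eval r := by
  have h : (fun x : ℝ => (x^2 - 1)^n) = fun x : ℝ => (((X:Polynomial ℝ)^2 - 1)^n).eval x := by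
    funext x; simp
  rw [legendre, legP, h, iteratedDeriv_eval]
  simp

lemma exists_factor (n k : ℕ) (hk : k ≤ n) :
    ∃ q : Polynomial ℝ, derivative^[k] ((X^2-1)^n) = (X^2-1)^(n-k) * q := by
  induction k with
  | zero => exact ⟨1, by simp⟩
  | succ k ih =>
    obtain ⟨q, hq⟩ := ih (by omega)
    refine ⟨C ((n-k : ℕ):ℝ) * (C 2 * X) * q + (X^2-1) * derivative q, ?_⟩
    rw [Function.iterate_succ_apply', hq, derivative_mul, derivative_pow]
    have h2 : derivative ((X:Polynomial ℝ)^2 - 1) = C 2 * X := by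
      rw [derivative_sub, derivative_one, sub_zero, derivative_X_pow]
      norm_num
    have h1 : n - k = (n - (k+1)) + 1 := by omega
    rw [h2, h1]
    simp only [Nat.add_sub_cancel]
    ring

lemma eval_iter_deriv_zero {n k : ℕ} (hk : k < n) {x : ℝ} (hx : x^2 - 1 = 0) :
    (derivative^[k] ((X^2-1)^n : Polynomial ℝ)).eval x = 0 := by
  obtain ⟨q, hq⟩ := exists_factor n k hk.le
  rw [hq]
  simp [hx, zero_pow (show n - k ≠ 0 by omega)]

lemma ibp (u v : Polynomial ℝ) :
    ∫ r in (-1:ℝ)..1, u.eval r * (derivative v).eval r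
      = u.eval 1 * v.eval 1 - u.eval (-1) * v.eval (-1)
        - ∫ r in (-1:ℝ)..1, (derivative u).eval r * v.eval r := by
  have := intervalIntegral.integral_mul_deriv_eq_deriv_mul (a := (-1:ℝ)) (b := 1)
    (u := fun x => u.eval x) (v := fun x => v.eval x)
    (u' := fun x => (derivative u).eval x) (v' := fun x => (derivative v).eval x)
    (fun x _ => u.hasDerivAt x) (fun x _ => v.hasDerivAt x)
    ((u.derivative.continuous).intervalIntegrable _ _)
    ((v.derivative.continuous).intervalIntegrable _ _)
  simpa using this

lemma key (n : ℕ) (f : Polynomial ℝ) (j : ℕ) (hj : j ≤ n) :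
    ∫ r in (-1:ℝ)..1, (derivative^[n] ((X^2-1)^n : Polynomial ℝ)).eval r * f.eval r
      = (-1:ℝ)^j * ∫ r in (-1:ℝ)..1,
          (derivative^[n-j] ((X^2-1)^n : Polynomial ℝ)).eval r * (derivative^[j] f).eval r := by
  induction j with
  | zero => simp
  | succ j ih =>
    rw [ih (by omega)]
    have h1 : n - j = (n - (j+1)) + 1 := by omega
    have h2 : derivative^[n-j] ((X^2-1)^n : Polynomial ℝ)
        = derivative (derivative^[n-(j+1)] ((X^2-1)^n : Polynomial ℝ)) := by
      rw [h1, Function.iterate_succ_apply']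
    have h3 : ∀ r : ℝ, (derivative^[n-j] ((X^2-1)^n : Polynomial ℝ)).eval r * (derivative^[j] f).eval r
        = (derivative^[j] f).eval r * (derivative (derivative^[n-(j+1)] ((X^2-1)^n : Polynomial ℝ))).eval r := by
      intro r; rw [← h2]; ring
    simp only [h3]
    rw [ibp]
    rw [eval_iter_deriv_zero (by omega : n - (j+1) < n) (by norm_num : (1:ℝ)^2 - 1 = 0),
        eval_iter_deriv_zero (by omega : n - (j+1) < n) (by norm_num : (-1:ℝ)^2 - 1 = 0)]
    have h4 : ∀ r : ℝ, (derivative (derivative^[j] f)).eval r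
          * (derivative^[n-(j+1)] ((X^2-1)^n : Polynomial ℝ)).eval r
        = (derivative^[n-(j+1)] ((X^2-1)^n : Polynomial ℝ)).eval r * (derivative^[j+1] f).eval r := by
      intro r; rw [← Function.iterate_succ_apply' derivative]; ring
    have h5 : (∫ r in (-1:ℝ)..1, (derivative (derivative^[j] f)).eval r
          * (derivative^[n-(j+1)] ((X^2-1)^n : Polynomial ℝ)).eval r)
        = ∫ r in (-1:ℝ)..1, (derivative^[n-(j+1)] ((X^2-1)^n : Polynomial ℝ)).eval r
            * (derivative^[j+1] f).eval r :=
      intervalIntegral.integral_congr (fun r _ => h4 r)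
    rw [h5, pow_succ]
    ring

lemma orth_zero (n : ℕ) (f : Polynomial ℝ) (hf : f.natDegree < n) :
    ∫ r in (-1:ℝ)..1, (legP n).eval r * f.eval r = 0 := by
  have h : ∀ r : ℝ, (legP n).eval r * f.eval r
      = ((1:ℝ) / (2^n * (Nat.factorial n)))
        * ((derivative^[n] ((X^2-1)^n : Polynomial ℝ)).eval r * f.eval r) := by
    intro r; simp [legP]; ring
  simp only [h]
  rw [intervalIntegral.integral_const_mul, key n f n le_rfl,
      Polynomial.iterate_derivative_eq_zero hf]
  simp

lemma deriv_sq_sub_one : derivative ((X:Polynomial ℝ)^2 - 1) = C 2 * X := by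
  rw [derivative_sub, derivative_one, sub_zero, derivative_X_pow]
  norm_num

lemma W_natDegree (n : ℕ) : (((X:Polynomial ℝ)^2 - 1)^n).natDegree = 2*n := by
  have h1 : ((X:Polynomial ℝ)^2 - 1) = X^2 - C 1 := by rw [map_one]
  rw [natDegree_pow, h1, natDegree_X_pow_sub_C]
  ring

lemma W_monic (n : ℕ) : (((X:Polynomial ℝ)^2 - 1)^n).Monic := by
  have h1 : ((X:Polynomial ℝ)^2 - 1) = X^2 - C 1 := by rw [map_one]
  rw [h1]
  exact (monic_X_pow_sub_C (1:ℝ) two_ne_zero).pow n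

lemma iter_deriv_top (n : ℕ) :
    derivative^[2*n] (((X:Polynomial ℝ)^2-1)^n) = C (((2*n).factorial : ℕ) : ℝ) := by
  have hdeg : (derivative^[2*n] (((X:Polynomial ℝ)^2-1)^n)).natDegree ≤ 0 := by
    have := natDegree_iterate_derivative (((X:Polynomial ℝ)^2-1)^n) (2*n)
    rw [W_natDegree] at this
    omega
  rw [Polynomial.eq_C_of_natDegree_le_zero hdeg, coeff_iterate_derivative]
  simp only [zero_add, Nat.descFactorial_self]
  have hc : (((X:Polynomial ℝ)^2-1)^n).coeff (2*n) = 1 := by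
    have := (W_monic n).coeff_natDegree
    rwa [W_natDegree] at this
  rw [hc]
  simp

lemma J_val (n : ℕ) : (∫ r in (-1:ℝ)..1, (r^2-1)^n)
    = (-1:ℝ)^n * 2^(2*n+1) * ((n.factorial : ℕ) : ℝ)^2 / (((2*n+1).factorial : ℕ) : ℝ) := by
  induction n with
  | zero => norm_num
  | succ n ih =>
    set J : ℕ → ℝ := fun m => ∫ r in (-1:ℝ)..1, (r^2-1)^m with hJ
    have hWe : ∀ (m : ℕ), (fun r : ℝ => (((X:Polynomial ℝ)^2-1)^m).eval r) = fun r : ℝ => (r^2-1)^m := by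
      intro m; funext x; simp
    have hcont : ∀ m : ℕ, Continuous (fun r : ℝ => (r^2-1)^m) := by
      intro m; fun_prop
    have hibp := ibp X (((X:Polynomial ℝ)^2-1)^(n+1))
    rw [derivative_X] at hibp
    simp only [eval_X, eval_one, one_mul, eval_pow, eval_sub] at hibp
    norm_num at hibp
    -- hibp : ∫ r, r * (deriv W).eval r = - J (n+1)
    have hpt : ∀ r : ℝ, r * (derivative (((X:Polynomial ℝ)^2-1)^(n+1))).eval r
        = (2*(n:ℝ)+2) * ((r^2-1)^(n+1) + (r^2-1)^n) := by
      intro r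
      rw [derivative_pow, deriv_sq_sub_one]
      simp only [eval_mul, eval_C, eval_pow, eval_X, eval_sub, eval_one, eval_natCast]
      push_cast
      ring
    have hsplit : (∫ r in (-1:ℝ)..1, r * (derivative (((X:Polynomial ℝ)^2-1)^(n+1))).eval r)
        = (2*(n:ℝ)+2) * (J (n+1) + J n) := by
      rw [intervalIntegral.integral_congr (g := fun r : ℝ =>
          (2*(n:ℝ)+2) * ((r^2-1)^(n+1) + (r^2-1)^n)) (fun r _ => hpt r)]
      rw [intervalIntegral.integral_const_mul, intervalIntegral.integral_add
        ((hcont (n+1)).intervalIntegrable _ _) ((hcont n).intervalIntegrable _ _)]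
    have heq : (2*(n:ℝ)+2) * (J (n+1) + J n) = - J (n+1) := by
      rw [← hsplit]; exact hibp
    have hJn : J n = (-1:ℝ)^n * 2^(2*n+1) * ((n.factorial : ℕ) : ℝ)^2 / (((2*n+1).factorial : ℕ) : ℝ) := ih
    have hf1 : (((n+1).factorial : ℕ) : ℝ) = ((n:ℝ)+1) * ((n.factorial : ℕ) : ℝ) := by
      rw [Nat.factorial_succ]; push_cast; ring
    have hf2 : (((2*(n+1)+1).factorial : ℕ) : ℝ)
        = (2*(n:ℝ)+3) * ((2*(n:ℝ)+2) * (((2*n+1).factorial : ℕ) : ℝ)) := by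
      rw [show 2*(n+1)+1 = (2*n+1+1)+1 by ring, Nat.factorial_succ, Nat.factorial_succ]
      push_cast; ring
    have hne1 : (((2*n+1).factorial : ℕ) : ℝ) ≠ 0 := by
      exact_mod_cast Nat.factorial_ne_zero _
    have hne2 : (2*(n:ℝ)+3) ≠ 0 := by positivity
    have hJs : J (n+1) = -(2*(n:ℝ)+2) * J n / (2*(n:ℝ)+3) := by
      field_simp
      linarith [heq]
    show J (n+1) = _
    rw [hJs, hJn, hf1, hf2, pow_succ, show 2*(n+1)+1 = 2*n+1+2 by ring, pow_add]
    field_simp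
    ring


lemma norm_sq (n : ℕ) :
    ∫ r in (-1:ℝ)..1, (legP n).eval r * (legP n).eval r = 2 / (2*(n:ℝ)+1) := by
  set c : ℝ := (1:ℝ) / (2^n * (Nat.factorial n)) with hc
  have hpt : ∀ r : ℝ, (legP n).eval r * (legP n).eval r
      = c * ((derivative^[n] (((X:Polynomial ℝ)^2-1)^n)).eval r * (legP n).eval r) := by
    intro r; simp only [legP, eval_mul, eval_C, ← hc]; ring
  rw [intervalIntegral.integral_congr (g := fun r : ℝ =>
      c * ((derivative^[n] (((X:Polynomial ℝ)^2-1)^n)).eval r * (legP n).eval r))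
      (fun r _ => hpt r)]
  rw [intervalIntegral.integral_const_mul, key n (legP n) n le_rfl]
  have hD : derivative^[n] (legP n) = C (c * (((2*n).factorial : ℕ) : ℝ)) := by
    rw [legP, iterate_derivative_C_mul, ← hc]
    rw [show derivative^[n] (derivative^[n] (((X:Polynomial ℝ)^2-1)^n))
        = derivative^[2*n] (((X:Polynomial ℝ)^2-1)^n) by
      rw [two_mul, ← Function.iterate_add_apply]]
    rw [iter_deriv_top, ← C_mul]
  rw [hD]
  have hpt2 : ∀ r : ℝ, (derivative^[n-n] (((X:Polynomial ℝ)^2-1)^n)).eval r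
      * (C (c * (((2*n).factorial : ℕ) : ℝ)) : Polynomial ℝ).eval r
      = (c * (((2*n).factorial : ℕ) : ℝ)) * (r^2-1)^n := by
    intro r; simp [Nat.sub_self]; ring
  rw [intervalIntegral.integral_congr (g := fun r : ℝ =>
      (c * (((2*n).factorial : ℕ) : ℝ)) * (r^2-1)^n) (fun r _ => hpt2 r)]
  rw [intervalIntegral.integral_const_mul, J_val]
  have hf0 : ((Nat.factorial n : ℕ) : ℝ) ≠ 0 := by exact_mod_cast Nat.factorial_ne_zero _
  have hf1 : (((2*n+1).factorial : ℕ) : ℝ) = (2*(n:ℝ)+1) * (((2*n).factorial : ℕ) : ℝ) := by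
    rw [Nat.factorial_succ]; push_cast; ring
  have hf2 : (((2*n).factorial : ℕ) : ℝ) ≠ 0 := by exact_mod_cast Nat.factorial_ne_zero _
  have hf3 : (2*(n:ℝ)+1) ≠ 0 := by positivity
  have h2n : (2:ℝ)^(2*n+1) = 2^n * 2^n * 2 := by
    rw [two_mul, pow_add, pow_add, pow_one]
  have hsq : (-1:ℝ)^n * (-1:ℝ)^n = 1 := by
    rw [← mul_pow]; norm_num
  rw [hc, hf1, h2n]
  have key1 : (-1:ℝ)^(n*2) = 1 := by rw [mul_comm, pow_mul]; norm_num
  have key2 : (-1:ℝ)^(2*n) = 1 := by rw [pow_mul]; norm_num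
  field_simp
  ring_nf
  simp only [key1, key2]

open Polynomial in
theorem gL_inner_product_deriv (p : ℕ) (hp : 1 ≤ p) (η : ℝ) (hη : 0 ≤ η)
    (φ : Polynomial ℝ) (hφ : φ.degree ≤ (p - 1 : ℕ)) (α : ℕ → ℝ)
    (hα : ∀ r : ℝ, φ.derivative.eval r = ∑ i ∈ Finset.range p, α i * legendre i r) :
    ∫ r in (-1:ℝ)..1, gL p η r * φ.derivative.eval r
      = (-1:ℝ)^(p+1) * η * α (p-1) / ((1 + η) * (2*(p:ℝ) - 1)) := by
  have h1η : (0:ℝ) < 1 + η := by linarith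
  have hφd : (derivative φ).natDegree < p := by
    have h1 : φ.natDegree ≤ p - 1 := natDegree_le_iff_degree_le.mpr hφ
    have h2 := natDegree_derivative_le φ
    omega
  have hcontL : ∀ j : ℕ, Continuous (legendre j) := by
    intro j
    have : legendre j = fun r => (legP j).eval r := funext fun r => legendre_eq j r
    rw [this]; exact (legP j).continuous
  have hcontf : Continuous (fun r : ℝ => (derivative φ).eval r) := (derivative φ).continuous
  have hcont2 : ∀ j : ℕ, Continuous (fun r : ℝ => legendre j r * (derivative φ).eval r) :=
    fun j => (hcontL j).mul hcontf
  have hdegL : ∀ i : ℕ, (legP i).natDegree ≤ i := by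
    intro i
    refine (natDegree_C_mul_le _ _).trans ?_
    have := natDegree_iterate_derivative (((X:Polynomial ℝ)^2-1)^i) i
    rw [W_natDegree] at this
    omega
  have hTp : (∫ r in (-1:ℝ)..1, legendre p r * (derivative φ).eval r) = 0 := by
    simp only [legendre_eq]; exact orth_zero p (derivative φ) hφd
  have hTp1 : (∫ r in (-1:ℝ)..1, legendre (p+1) r * (derivative φ).eval r) = 0 := by
    simp only [legendre_eq]; exact orth_zero (p+1) (derivative φ) (by omega)
  have hcast : ((p - 1 : ℕ) : ℝ) = (p:ℝ) - 1 := by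
    have := Nat.cast_sub hp (R := ℝ); simpa using this
  have hTm : (∫ r in (-1:ℝ)..1, legendre (p-1) r * (derivative φ).eval r)
      = α (p-1) * (2 / (2*(p:ℝ)-1)) := by
    have hpt : ∀ r : ℝ, legendre (p-1) r * (derivative φ).eval r
        = ∑ i ∈ Finset.range p, α i * (legendre (p-1) r * legendre i r) := by
      intro r
      rw [hα r, Finset.mul_sum]
      exact Finset.sum_congr rfl fun i _ => by ring
    rw [intervalIntegral.integral_congr (g := fun r => ∑ i ∈ Finset.range p,
        α i * (legendre (p-1) r * legendre i r)) (fun r _ => hpt r)]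
    rw [intervalIntegral.integral_finset_sum (f := fun i r => α i * (legendre (p-1) r * legendre i r)) (fun i _ =>
      ((continuous_const.mul ((hcontL (p-1)).mul (hcontL i))).intervalIntegrable _ _))]
    have hterm : ∀ i ∈ Finset.range p, i ≠ p - 1 →
        (∫ r in (-1:ℝ)..1, α i * (legendre (p-1) r * legendre i r)) = 0 := by
      intro i hi hne
      rw [intervalIntegral.integral_const_mul]
      have hz : (∫ r in (-1:ℝ)..1, legendre (p-1) r * legendre i r) = 0 := by
        simp only [legendre_eq]
        exact orth_zero (p-1) (legP i) (by
          have h1 := hdegL i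
          have h2 : i < p := Finset.mem_range.mp hi
          omega)
      rw [hz, mul_zero]
    rw [Finset.sum_eq_single (p-1) hterm (fun h => absurd (Finset.mem_range.mpr (by omega)) h)]
    rw [intervalIntegral.integral_const_mul]
    have hns : (∫ r in (-1:ℝ)..1, legendre (p-1) r * legendre (p-1) r)
        = 2 / (2*(p:ℝ)-1) := by
      simp only [legendre_eq]
      rw [norm_sq (p-1), hcast]
      ring_nf
    rw [hns]
  have hsplit : ∀ r : ℝ, gL p η r * (derivative φ).eval r =
      ((-1:ℝ)^p/2) * (legendre p r * (derivative φ).eval r)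
      - ((-1:ℝ)^p/2) * (η/(1+η)) * (legendre (p-1) r * (derivative φ).eval r)
      - ((-1:ℝ)^p/2) * (1/(1+η)) * (legendre (p+1) r * (derivative φ).eval r) := by
    intro r; rw [gL]; field_simp; ring
  rw [intervalIntegral.integral_congr (g := fun r =>
      ((-1:ℝ)^p/2) * (legendre p r * (derivative φ).eval r)
      - ((-1:ℝ)^p/2) * (η/(1+η)) * (legendre (p-1) r * (derivative φ).eval r)
      - ((-1:ℝ)^p/2) * (1/(1+η)) * (legendre (p+1) r * (derivative φ).eval r))
      (fun r _ => hsplit r)]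
  rw [intervalIntegral.integral_sub (f := fun r => ((-1:ℝ)^p/2) * (legendre p r * (derivative φ).eval r)
      - ((-1:ℝ)^p/2) * (η/(1+η)) * (legendre (p-1) r * (derivative φ).eval r))
      (g := fun r => ((-1:ℝ)^p/2) * (1/(1+η)) * (legendre (p+1) r * (derivative φ).eval r))
      (((continuous_const.mul (hcont2 p)).sub
        (continuous_const.mul (hcont2 (p-1)))).intervalIntegrable _ _)
      ((continuous_const.mul (hcont2 (p+1))).intervalIntegrable _ _)]
  rw [intervalIntegral.integral_sub (f := fun r => ((-1:ℝ)^p/2) * (legendre p r * (derivative φ).eval r))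
      (g := fun r => ((-1:ℝ)^p/2) * (η/(1+η)) * (legendre (p-1) r * (derivative φ).eval r))
      ((continuous_const.mul (hcont2 p)).intervalIntegrable _ _)
      ((continuous_const.mul (hcont2 (p-1))).intervalIntegrable _ _)]
  rw [intervalIntegral.integral_const_mul, intervalIntegral.integral_const_mul,
      intervalIntegral.integral_const_mul, hTp, hTp1, hTm]
  have hd : (2*(p:ℝ)-1) ≠ 0 := by
    have : (1:ℝ) ≤ (p:ℝ) := by exact_mod_cast hp
    nlinarith
  rw [pow_succ]
  field_simp
  ring
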